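/- Let M ≥ 1 and let x : Fin M → ℝ → ℝ be a family of continuously differentiable functions with x i r > 0 for all i and r. Define the geometric mean G r := (∏ i, x i r) ^ (1 / M : ℝ). Suppose there are continuous functions c : Fin M → ℝ → ℝ with c i r > 0 for all i, r, such that for all i and r, deriv (x i) r = −(c i r) * Real.log (x i r / G r). Then the function r ↦ ⨆ i, x i r is antitone, the function r ↦ ⨅ i, x i r is monotone, and consequently the function r ↦ (⨆ i, x i r) − (⨅ i, x i r) is antitone. -/

import Mathlib

open Real Filter Set Topology

/-- Auxiliary lemma: under the hypotheses of the theorem, the pointwise supremum is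
nonincreasing. -/
private lemma sup_antitone_aux (M : ℕ) (hM : 1 ≤ M)
    (x : Fin M → ℝ → ℝ) (hx : ∀ i, ContDiff ℝ 1 (x i))
    (hpos : ∀ i r, 0 < x i r)
    (c : Fin M → ℝ → ℝ) (hc : ∀ i, Continuous (c i))
    (hcpos : ∀ i r, 0 < c i r)
    (hode : ∀ i r, deriv (x i) r =
      -(c i r) * Real.log (x i r / (∏ j, x j r) ^ (1 / M : ℝ))) :
    Antitone (fun r => ⨆ i, x i r) := by
  haveI : NeZero M := ⟨by omega⟩
  haveI : Nonempty (Fin M) := Fin.pos_iff_nonempty.1 (by omega)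
  set F : ℝ → ℝ := fun r => ⨆ i, x i r with hFdef
  have hxc : ∀ i, Continuous (x i) := fun i => (hx i).continuous
  have hbdd : ∀ r, BddAbove (Set.range fun i => x i r) :=
    fun r => (Set.finite_range _).bddAbove
  have hFle : ∀ r i, x i r ≤ F r := fun r i => le_ciSup (hbdd r) i
  have hFex : ∀ r, ∃ i, x i r = F r := fun r => exists_eq_ciSup_of_finite
  -- continuity of F
  have hFc : Continuous F := by
    rw [continuous_iff_continuousAt]
    intro r
    have h := Filter.Tendsto.finset_sup'_nhds_apply (s := (Finset.univ : Finset (Fin M)))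
      (f := fun i => x i) (l := 𝓝 r) (g := fun i => x i r)
      Finset.univ_nonempty (fun i _ => (hxc i).continuousAt)
    have e1 : (fun a => (Finset.univ : Finset (Fin M)).sup' Finset.univ_nonempty
        (fun i => x i a)) = F := by
      funext a
      exact Finset.sup'_univ_eq_ciSup (fun i => x i a)
    have e2 : (Finset.univ : Finset (Fin M)).sup' Finset.univ_nonempty
        (fun i => x i r) = F r := Finset.sup'_univ_eq_ciSup _
    rw [e1, e2] at h
    exact h
  -- at any argmax, the derivative is nonpositive
  have hGpos : ∀ t, 0 < (∏ j, x j t) ^ (1 / M : ℝ) := by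
    intro t
    exact Real.rpow_pos_of_pos (Finset.prod_pos fun j _ => hpos j t) _
  have key : ∀ t i, x i t = F t → deriv (x i) t ≤ 0 := by
    intro t i hi
    have hGle : (∏ j, x j t) ^ (1 / M : ℝ) ≤ x i t := by
      have hprod : (∏ j, x j t) ≤ (x i t) ^ M := by
        calc (∏ j, x j t) ≤ ∏ _j : Fin M, x i t := by
              apply Finset.prod_le_prod
              · exact fun j _ => (hpos j t).le
              · intro j _
                rw [hi]; exact hFle t j
          _ = (x i t) ^ M := by simp [Finset.prod_const, Finset.card_univ]
      have h1 : (∏ j, x j t) ^ (1 / M : ℝ) ≤ ((x i t) ^ M) ^ (1 / M : ℝ) :=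
        Real.rpow_le_rpow (Finset.prod_nonneg fun j _ => (hpos j t).le) hprod
          (by positivity)
      have h2 : ((x i t) ^ M) ^ (1 / M : ℝ) = x i t := by
        rw [← Real.rpow_natCast (x i t) M, ← Real.rpow_mul (hpos i t).le]
        rw [mul_one_div, div_self (by exact_mod_cast (by omega : M ≠ 0)), Real.rpow_one]
      rwa [h2] at h1
    have hlog : 0 ≤ Real.log (x i t / (∏ j, x j t) ^ (1 / M : ℝ)) :=
      Real.log_nonneg ((one_le_div (hGpos t)).2 hGle)
    rw [hode i t, neg_mul]
    exact neg_nonpos.2 (mul_nonneg (hcpos i t).le hlog)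
  -- main monotonicity argument via a Grönwall-type inequality
  intro a b hab
  have hmain : ∀ y ∈ Icc a b, F y ≤ gronwallBound (F a) 0 0 (y - a) := by
    apply le_gronwallBound_of_liminf_deriv_right_le (f' := fun _ => (0 : ℝ))
      (hFc.continuousOn)
    · -- the liminf slope condition
      intro t _ht r hr
      apply Filter.Eventually.frequently
      have hall : ∀ᶠ z in 𝓝[>] t, ∀ i, x i z - F t < r * (z - t) := by
        rw [eventually_all]
        intro i
        by_cases hi : x i t = F t
        · -- active index: derivative ≤ 0 < r
          have hd : HasDerivAt (x i) (deriv (x i) t) t :=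
            (((hx i).differentiable one_ne_zero) t).hasDerivAt
          have hslope : Tendsto (slope (x i) t) (𝓝[≠] t) (𝓝 (deriv (x i) t)) :=
            hasDerivAt_iff_tendsto_slope.1 hd
          have hslope' : Tendsto (slope (x i) t) (𝓝[>] t) (𝓝 (deriv (x i) t)) :=
            hslope.mono_left (nhdsWithin_mono t fun z hz => ne_of_gt hz)
          have hev : ∀ᶠ z in 𝓝[>] t, slope (x i) t z < r :=
            hslope'.eventually_lt_const (lt_of_le_of_lt (key t i hi) hr)
          filter_upwards [hev, self_mem_nhdsWithin] with z hz hzt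
          have hzt' : (0 : ℝ) < z - t := sub_pos.2 hzt
          have : (x i z - x i t) / (z - t) < r := by
            rw [slope_def_field] at hz
            simpa [div_sub_div_same] using hz
          have := (div_lt_iff₀ hzt').1 this
          rw [hi] at this
          linarith
        · -- inactive index: stays below F t
          have hlt : x i t < F t := lt_of_le_of_ne (hFle t i) hi
          have hev : ∀ᶠ z in 𝓝 t, x i z < F t :=
            ((hxc i).continuousAt (x := t)).eventually_lt_const hlt
          filter_upwards [eventually_nhdsWithin_of_eventually_nhds hev,
            self_mem_nhdsWithin] with z hz hzt
          have hzt' : (0 : ℝ) < z - t := sub_pos.2 hzt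
          nlinarith
      filter_upwards [hall, self_mem_nhdsWithin] with z hz hzt
      have hzt' : (0 : ℝ) < z - t := sub_pos.2 hzt
      obtain ⟨i, hi⟩ := hFex z
      have h1 : F z - F t < r * (z - t) := by rw [← hi]; exact hz i
      calc (z - t)⁻¹ * (F z - F t) < (z - t)⁻¹ * (r * (z - t)) :=
            mul_lt_mul_of_pos_left h1 (inv_pos.2 hzt')
        _ = r := by field_simp
    · exact le_rfl
    · intro t _ht
      simp
  have := hmain b ⟨hab, le_rfl⟩
  simpa [gronwallBound_K0] using this

/-- Abstract form of the paper's Proposition 6: if each positive quantity `x i`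
evolves according to `x i' = -(c i) * log (x i / G)` where `G` is the geometric mean of
the `x j` and `c i > 0`, then the maximum of the `x i` is nonincreasing, the minimum is
nondecreasing, and hence the maximal pairwise gap is nonincreasing. -/
theorem consensus_update_gap_antitone (M : ℕ) (hM : 1 ≤ M)
    (x : Fin M → ℝ → ℝ) (hx : ∀ i, ContDiff ℝ 1 (x i))
    (hpos : ∀ i r, 0 < x i r)
    (c : Fin M → ℝ → ℝ) (hc : ∀ i, Continuous (c i))
    (hcpos : ∀ i r, 0 < c i r)
    (hode : ∀ i r, deriv (x i) r =
      -(c i r) * Real.log (x i r / (∏ j, x j r) ^ (1 / M : ℝ))) :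
    Antitone (fun r => ⨆ i, x i r) ∧
    Monotone (fun r => ⨅ i, x i r) ∧
    Antitone (fun r => (⨆ i, x i r) - ⨅ i, x i r) := by
  haveI : Nonempty (Fin M) := Fin.pos_iff_nonempty.1 (by omega)
  have hsup : Antitone (fun r => ⨆ i, x i r) :=
    sup_antitone_aux M hM x hx hpos c hc hcpos hode
  -- the infimum case, via the reciprocal family
  have hinfpos : ∀ r, 0 < ⨅ i, x i r := by
    intro r
    obtain ⟨i, hi⟩ := exists_eq_ciInf_of_finite (f := fun i => x i r)
    rw [← hi]; exact hpos i r
  have hinf : Monotone (fun r => ⨅ i, x i r) := by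
    set z : Fin M → ℝ → ℝ := fun i r => (x i r)⁻¹ with hz
    have hzx : ∀ i, ContDiff ℝ 1 (z i) := fun i => (hx i).inv (fun r => (hpos i r).ne')
    have hzpos : ∀ i r, 0 < z i r := fun i r => inv_pos.2 (hpos i r)
    set c' : Fin M → ℝ → ℝ := fun i r => c i r / (x i r) ^ 2 with hc'
    have hc'c : ∀ i, Continuous (c' i) := fun i =>
      (hc i).div (((hx i).continuous).pow 2) (fun r => pow_ne_zero 2 (hpos i r).ne')
    have hc'pos : ∀ i r, 0 < c' i r := fun i r => by
      have := hpos i r; have := hcpos i r; positivity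
    have hzode : ∀ i r, deriv (z i) r =
        -(c' i r) * Real.log (z i r / (∏ j, z j r) ^ (1 / M : ℝ)) := by
      intro i r
      have hd : HasDerivAt (x i) (deriv (x i) r) r :=
        (((hx i).differentiable one_ne_zero) r).hasDerivAt
      have hdz : HasDerivAt (z i) (-(deriv (x i) r) / (x i r) ^ 2) r :=
        hd.inv (hpos i r).ne'
      rw [hdz.deriv, hode i r]
      have hGpos : 0 < (∏ j, x j r) ^ (1 / M : ℝ) :=
        Real.rpow_pos_of_pos (Finset.prod_pos fun j _ => hpos j r) _
      have hprodinv : (∏ j, z j r) = (∏ j, x j r)⁻¹ := by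
        simp [hz, Finset.prod_inv_distrib]
      have hGz : (∏ j, z j r) ^ (1 / M : ℝ) = ((∏ j, x j r) ^ (1 / M : ℝ))⁻¹ := by
        rw [hprodinv, Real.inv_rpow (Finset.prod_nonneg fun j _ => (hpos j r).le)]
      rw [hGz]
      have harg : z i r / ((∏ j, x j r) ^ (1 / M : ℝ))⁻¹ =
          (x i r / (∏ j, x j r) ^ (1 / M : ℝ))⁻¹ := by
        have h1 : x i r ≠ 0 := (hpos i r).ne'
        have h2 : (∏ j, x j r) ^ (1 / M : ℝ) ≠ 0 := hGpos.ne'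
        simp only [hz]
        field_simp
      rw [harg, Real.log_inv]
      have hx2 : (x i r) ^ 2 ≠ 0 := pow_ne_zero 2 (hpos i r).ne'
      simp only [hc']
      field_simp
    have hzsup : Antitone (fun r => ⨆ i, z i r) :=
      sup_antitone_aux M hM z hzx hzpos c' hc'c hc'pos hzode
    have hswap : ∀ r, (⨆ i, z i r) = (⨅ i, x i r)⁻¹ := by
      intro r
      obtain ⟨j, hj⟩ := exists_eq_ciInf_of_finite (f := fun i => x i r)
      have hjle : ∀ i, x j r ≤ x i r := by
        intro i
        rw [hj]
        exact ciInf_le (Set.finite_range _).bddBelow i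
      rw [← hj]
      apply le_antisymm
      · apply ciSup_le
        intro i
        exact inv_anti₀ (hpos j r) (hjle i)
      · exact le_ciSup (f := fun i => z i r) (Set.finite_range _).bddAbove j
    intro a b hab
    have h := hzsup hab
    simp only [hswap] at h
    exact (inv_le_inv₀ (hinfpos b) (hinfpos a)).1 h
  exact ⟨hsup, hinf, fun a b hab => sub_le_sub (hsup hab) (hinf hab)⟩
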